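/- arXiv:2011.10067 — 3 statements merged into one kernel-verified Lean document; each statement's English description precedes it below -/
import Mathlib

section
/- Let Y_0, Y_1, …, Y_n be a sequence of real random variables adapted to a filtration F_0 ⊆ F_1 ⊆ … ⊆ F_n, with |Y_{i+1} − Y_i| ≤ 1 almost surely for every i. For each i ∈ {1,…,n}, let D_i denote the event that E[Y_i − Y_{i−1} | F_{i−1}] < 0. Then for every ε > 0: Pr[Y_n ≤ Y_0 − ε] ≤ exp(−ε²/(2n)) + Pr[D_1 ∪ D_2 ∪ … ∪ D_n]. -/
open MeasureTheory ProbabilityTheory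
open scoped ENNReal NNReal

lemma chord_exp_le {t x : ℝ} (hx : |x| ≤ 1) :
    Real.exp (-(t * x)) ≤ Real.cosh t - Real.sinh t * x := by
  obtain ⟨hx1, hx2⟩ := abs_le.mp hx
  have h := convexOn_exp.2 (Set.mem_univ t) (Set.mem_univ (-t))
      (by linarith : (0:ℝ) ≤ (1 - x)/2) (by linarith : (0:ℝ) ≤ (1 + x)/2) (by ring)
  simp only [smul_eq_mul] at h
  have he : (1 - x)/2 * t + (1 + x)/2 * (-t) = -(t * x) := by ring
  rw [he] at h
  rw [Real.cosh_eq, Real.sinh_eq]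
  have : (1 - x)/2 * Real.exp t + (1 + x)/2 * Real.exp (-t)
      = (Real.exp t + Real.exp (-t))/2 - (Real.exp t - Real.exp (-t))/2 * x := by ring
  linarith

theorem azuma_except_small_probability
    {Ω : Type*} {m : MeasurableSpace Ω} (μ : Measure Ω) [IsProbabilityMeasure μ]
    (F : Filtration ℕ m) (n : ℕ) (Y : ℕ → Ω → ℝ)
    (hadp : ∀ i ≤ n, StronglyMeasurable[F i] (Y i))
    (hbdd : ∀ i < n, ∀ᵐ ω ∂μ, |Y (i + 1) ω - Y i ω| ≤ 1)
    (ε : ℝ) (hε : 0 < ε) :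
    μ {ω | Y n ω ≤ Y 0 ω - ε} ≤
      ENNReal.ofReal (Real.exp (-ε ^ 2 / (2 * n))) +
        μ (⋃ i ∈ Finset.Icc 1 n,
            {ω | (μ[fun ω' => Y i ω' - Y (i - 1) ω' | F (i - 1)]) ω < 0}) := by
  rcases Nat.eq_zero_or_pos n with hn0 | hn
  · subst hn0
    calc μ {ω | Y 0 ω ≤ Y 0 ω - ε} ≤ 1 := prob_le_one
      _ ≤ ENNReal.ofReal (Real.exp (-ε ^ 2 / (2 * (0:ℕ)))) + _ := by
        simp
  set g : ℕ → Ω → ℝ := fun i => μ[fun ω' => Y (i+1) ω' - Y i ω' | F i] with hgdef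
  set d : ℕ → Ω → ℝ := fun i ω => if 0 ≤ g i ω then Y (i+1) ω - Y i ω else 0 with hddef
  set S : ℕ → Ω → ℝ := fun k ω => ∑ j ∈ Finset.range k, d j ω with hSdef
  set t : ℝ := ε / n with htdef
  have hnR : (0:ℝ) < n := by exact_mod_cast hn
  have ht : 0 < t := div_pos hε hnR
  -- basic facts
  have hΔmeas : ∀ i < n, StronglyMeasurable[F (i+1)] fun ω => Y (i+1) ω - Y i ω := fun i hi =>
    ((hadp (i+1) hi).sub ((hadp i hi.le).mono (F.mono i.le_succ)))
  have hΔint : ∀ i < n, Integrable (fun ω => Y (i+1) ω - Y i ω) μ := by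
    intro i hi
    refine Integrable.mono' (integrable_const 1)
      (((hΔmeas i hi).mono (F.le _)).aestronglyMeasurable) ?_
    filter_upwards [hbdd i hi] with ω hω using by simpa [Real.norm_eq_abs] using hω
  have hgmeas : ∀ i, StronglyMeasurable[F i] (g i) := fun i => stronglyMeasurable_condExp
  have hAset : ∀ i, MeasurableSet[F i] {ω | 0 ≤ g i ω} :=
    fun i => measurableSet_le measurable_const (hgmeas i).measurable
  have hdmeas : ∀ i < n, StronglyMeasurable[F (i+1)] (d i) := by
    intro i hi
    exact Measurable.stronglyMeasurable <| Measurable.ite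
      ((F.mono i.le_succ) _ (hAset i)) (hΔmeas i hi).measurable measurable_const
  have hdbdd : ∀ i < n, ∀ᵐ ω ∂μ, |d i ω| ≤ 1 := by
    intro i hi
    filter_upwards [hbdd i hi] with ω hω
    by_cases h : 0 ≤ g i ω <;> simp [hddef, h, hω]
  have hdint : ∀ i < n, Integrable (d i) μ := by
    intro i hi
    refine Integrable.mono' (integrable_const 1)
      (((hdmeas i hi).mono (F.le _)).aestronglyMeasurable) ?_
    filter_upwards [hdbdd i hi] with ω hω using by simpa [Real.norm_eq_abs] using hω
  -- conditional expectation of d is nonnegative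
  have hdcond : ∀ i < n, 0 ≤ᵐ[μ] μ[d i | F i] := by
    intro i hi
    have hind : StronglyMeasurable[F i] fun ω => if 0 ≤ g i ω then (1:ℝ) else 0 :=
      Measurable.stronglyMeasurable <| Measurable.ite (hAset i) measurable_const measurable_const
    have heq : d i = (fun ω => if 0 ≤ g i ω then (1:ℝ) else 0) * (fun ω => Y (i+1) ω - Y i ω) := by
      funext ω; by_cases h : 0 ≤ g i ω <;> simp [hddef, h]
    have hpull := condExp_stronglyMeasurable_mul_of_bound (F.le i) hind (hΔint i hi) 1
      (Filter.Eventually.of_forall fun ω => by by_cases h : 0 ≤ g i ω <;> simp [h])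
    rw [heq]
    filter_upwards [hpull] with ω hω
    rw [hω, Pi.mul_apply]
    rcases le_or_gt 0 (g i ω) with h | h
    · rw [if_pos h, one_mul]; exact h
    · rw [if_neg (not_le.mpr h), zero_mul]; exact le_rfl
  -- conditional Hoeffding bound
  have hcond : ∀ i < n, μ[fun ω => Real.exp (-(t * d i ω)) | F i] ≤ᵐ[μ] fun _ => Real.cosh t := by
    intro i hi
    have hexpint : Integrable (fun ω => Real.exp (-(t * d i ω))) μ := by
      refine Integrable.mono' (integrable_const (Real.exp t))
        ((Real.measurable_exp.comp
          (((hdmeas i hi).measurable.mono (F.le _) le_rfl).const_mul t).neg).aestronglyMeasurable) ?_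
      filter_upwards [hdbdd i hi] with ω hω
      rw [Real.norm_eq_abs, abs_of_pos (Real.exp_pos _), Real.exp_le_exp]
      nlinarith [abs_le.mp hω, ht.le]
    have hrhsint : Integrable (fun ω => Real.cosh t - Real.sinh t * d i ω) μ :=
      (integrable_const _).sub ((hdint i hi).const_mul _)
    have hmono := condExp_mono (m := F i) hexpint hrhsint
      (by filter_upwards [hdbdd i hi] with ω hω using chord_exp_le hω)
    have hsub : μ[fun ω => Real.cosh t - Real.sinh t * d i ω | F i]
        =ᵐ[μ] fun ω => Real.cosh t - Real.sinh t * (μ[d i | F i]) ω := by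
      have h1 := condExp_sub (m := F i) (μ := μ) (integrable_const (Real.cosh t))
        ((hdint i hi).const_mul (Real.sinh t))
      have h2 := condExp_const (F.le i) (Real.cosh t) (μ := μ)
      have h3 : μ[fun ω => Real.sinh t * d i ω | F i]
          =ᵐ[μ] fun ω => Real.sinh t * (μ[d i | F i]) ω := by
        exact condExp_smul (μ := μ) (m := F i) (Real.sinh t) (d i)
      calc μ[fun ω => Real.cosh t - Real.sinh t * d i ω | F i]
          =ᵐ[μ] μ[fun _ => Real.cosh t | F i] - μ[fun ω => Real.sinh t * d i ω | F i] := h1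
        _ =ᵐ[μ] fun ω => Real.cosh t - Real.sinh t * (μ[d i | F i]) ω := by
            filter_upwards [h3] with ω hω
            simp [h2, hω]
    filter_upwards [hmono, hsub, hdcond i hi] with ω h1 h2 h3
    rw [h2] at h1
    have : 0 ≤ Real.sinh t * (μ[d i | F i]) ω :=
      mul_nonneg (Real.sinh_nonneg_iff.mpr ht.le) h3
    simpa using h1.trans (by linarith)
  -- S is measurable and bounded
  have hSmeas : ∀ k ≤ n, StronglyMeasurable[F k] (S k) := by
    intro k hk
    refine Measurable.stronglyMeasurable <| Finset.measurable_sum _ fun j hj => ?_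
    have hj' : j < n := lt_of_lt_of_le (Finset.mem_range.mp hj) hk
    exact ((hdmeas j hj').measurable.mono (F.mono (Finset.mem_range.mp hj)) le_rfl)
  have hSbdd : ∀ k ≤ n, ∀ᵐ ω ∂μ, |S k ω| ≤ k := by
    intro k hk
    have : ∀ᵐ ω ∂μ, ∀ j ∈ Finset.range k, |d j ω| ≤ 1 := by
      refine (Filter.eventually_all_finite (Finset.range k).finite_toSet).2 fun j hj => ?_
      exact hdbdd j (lt_of_lt_of_le (Finset.mem_range.mp hj) hk)
    filter_upwards [this] with ω hω
    calc |S k ω| ≤ ∑ j ∈ Finset.range k, |d j ω| := Finset.abs_sum_le_sum_abs _ _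
      _ ≤ ∑ j ∈ Finset.range k, 1 := Finset.sum_le_sum fun j hj => hω j hj
      _ = k := by simp
  have hexpSint : ∀ k ≤ n, Integrable (fun ω => Real.exp (-(t * S k ω))) μ := by
    intro k hk
    refine Integrable.mono' (integrable_const (Real.exp (t * k)))
      ((Real.measurable_exp.comp
        (((hSmeas k hk).measurable.mono (F.le _) le_rfl).const_mul t).neg).aestronglyMeasurable) ?_
    filter_upwards [hSbdd k hk] with ω hω
    rw [Real.norm_eq_abs, abs_of_pos (Real.exp_pos _), Real.exp_le_exp]
    nlinarith [abs_le.mp hω, ht.le]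
  -- MGF induction
  have hMGF : ∀ k ≤ n, ∫ ω, Real.exp (-(t * S k ω)) ∂μ ≤ Real.cosh t ^ k := by
    intro k
    induction k with
    | zero => intro _; simp [hSdef]
    | succ k ih =>
      intro hk
      have hk' : k ≤ n := (Nat.le_succ k).trans hk
      have hkn : k < n := hk
      have hsplit : ∀ ω, Real.exp (-(t * S (k+1) ω))
          = Real.exp (-(t * S k ω)) * Real.exp (-(t * d k ω)) := by
        intro ω
        rw [← Real.exp_add]
        congr 1
        simp only [hSdef, Finset.sum_range_succ]
        ring
      have hfmeas : StronglyMeasurable[F k] fun ω => Real.exp (-(t * S k ω)) :=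
        Measurable.stronglyMeasurable <|
          Real.measurable_exp.comp (((hSmeas k hk').measurable.const_mul t).neg)
      have hfbound : ∀ᵐ ω ∂μ, ‖Real.exp (-(t * S k ω))‖ ≤ Real.exp (t * k) := by
        filter_upwards [hSbdd k hk'] with ω hω
        rw [Real.norm_eq_abs, abs_of_pos (Real.exp_pos _), Real.exp_le_exp]
        nlinarith [abs_le.mp hω, ht.le]
      have hhint : Integrable (fun ω => Real.exp (-(t * d k ω))) μ := by
        refine Integrable.mono' (integrable_const (Real.exp t))
          ((Real.measurable_exp.comp
            (((hdmeas k hkn).measurable.mono (F.le _) le_rfl).const_mul t).neg).aestronglyMeasurable) ?_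
        filter_upwards [hdbdd k hkn] with ω hω
        rw [Real.norm_eq_abs, abs_of_pos (Real.exp_pos _), Real.exp_le_exp]
        nlinarith [abs_le.mp hω, ht.le]
      have hfhint : Integrable (fun ω => Real.exp (-(t * S k ω)) * Real.exp (-(t * d k ω))) μ :=
        hhint.bdd_mul ((hfmeas.mono (F.le _)).aestronglyMeasurable) hfbound
      have hpull := condExp_stronglyMeasurable_mul_of_bound (F.le k) hfmeas hhint
        (Real.exp (t * k)) hfbound
      calc ∫ ω, Real.exp (-(t * S (k+1) ω)) ∂μ
          = ∫ ω, Real.exp (-(t * S k ω)) * Real.exp (-(t * d k ω)) ∂μ := by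
            exact integral_congr_ae (Filter.Eventually.of_forall hsplit)
        _ = ∫ ω, (μ[(fun ω => Real.exp (-(t * S k ω))) * fun ω => Real.exp (-(t * d k ω)) | F k]) ω ∂μ :=
            (integral_condExp (F.le k)).symm
        _ = ∫ ω, Real.exp (-(t * S k ω)) * (μ[fun ω => Real.exp (-(t * d k ω)) | F k]) ω ∂μ :=
            integral_congr_ae (hpull.mono fun ω hω => hω)
        _ ≤ ∫ ω, Real.exp (-(t * S k ω)) * Real.cosh t ∂μ := by
            refine integral_mono_ae ?_ ((hexpSint k hk').mul_const _) ?_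
            · exact integrable_condExp.bdd_mul ((hfmeas.mono (F.le _)).aestronglyMeasurable) hfbound
            · filter_upwards [hcond k hkn] with ω hω
              exact mul_le_mul_of_nonneg_left hω (Real.exp_pos _).le
        _ = Real.cosh t * ∫ ω, Real.exp (-(t * S k ω)) ∂μ := by
            rw [integral_mul_const]; ring
        _ ≤ Real.cosh t * Real.cosh t ^ k :=
            mul_le_mul_of_nonneg_left (ih hk') (Real.cosh_pos _).le
        _ = Real.cosh t ^ (k+1) := by ring
  -- Chernoff
  have hintS : ∫ ω, Real.exp (-(t * S n ω)) ∂μ ≤ Real.exp (n * (t^2/2)) := by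
    calc ∫ ω, Real.exp (-(t * S n ω)) ∂μ ≤ Real.cosh t ^ n := hMGF n le_rfl
      _ ≤ Real.exp (t^2/2) ^ n := pow_le_pow_left₀ (Real.cosh_pos _).le (Real.cosh_le_exp_half_sq t) n
      _ = Real.exp (n * (t^2/2)) := (Real.exp_nat_mul _ n).symm
  have hchernoff : μ {ω | S n ω ≤ -ε} ≤ ENNReal.ofReal (Real.exp (-ε^2 / (2*n))) := by
    have hsub : {ω | S n ω ≤ -ε} ⊆ {ω | Real.exp (t * ε) ≤ Real.exp (-(t * S n ω))} := by
      intro ω hω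
      simp only [Set.mem_setOf_eq] at hω ⊢
      rw [Real.exp_le_exp]
      nlinarith
    have hmarkov := mul_meas_ge_le_integral_of_nonneg
      (Filter.Eventually.of_forall fun ω => (Real.exp_pos _).le) (hexpSint n le_rfl) (Real.exp (t * ε))
    have h1 : (μ {ω | S n ω ≤ -ε}).toReal ≤ Real.exp (n * (t^2/2)) / Real.exp (t * ε) := by
      rw [le_div_iff₀ (Real.exp_pos _)]
      calc (μ {ω | S n ω ≤ -ε}).toReal * Real.exp (t * ε)
          ≤ (μ {ω | Real.exp (t * ε) ≤ Real.exp (-(t * S n ω))}).toReal * Real.exp (t * ε) :=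
            mul_le_mul_of_nonneg_right
              (ENNReal.toReal_mono (measure_ne_top μ _) (measure_mono hsub)) (Real.exp_pos _).le
        _ = Real.exp (t * ε) * (μ {ω | Real.exp (t * ε) ≤ Real.exp (-(t * S n ω))}).toReal := by ring
        _ ≤ ∫ ω, Real.exp (-(t * S n ω)) ∂μ := hmarkov
        _ ≤ Real.exp (n * (t^2/2)) := hintS
    have h2 : Real.exp (n * (t^2/2)) / Real.exp (t * ε) = Real.exp (-ε^2 / (2*n)) := by
      rw [← Real.exp_sub]
      congr 1
      field_simp [htdef]
      rw [htdef]; field_simp; ring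
    rw [← ENNReal.ofReal_toReal (measure_ne_top μ {ω | S n ω ≤ -ε})]
    exact ENNReal.ofReal_le_ofReal (h2 ▸ h1)
  -- inclusion
  have hincl : {ω | Y n ω ≤ Y 0 ω - ε} ⊆ {ω | S n ω ≤ -ε} ∪
      (⋃ i ∈ Finset.Icc 1 n, {ω | (μ[fun ω' => Y i ω' - Y (i - 1) ω' | F (i - 1)]) ω < 0}) := by
    intro ω hω
    by_cases hD : ω ∈ ⋃ i ∈ Finset.Icc 1 n,
        {ω | (μ[fun ω' => Y i ω' - Y (i - 1) ω' | F (i - 1)]) ω < 0}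
    · exact Or.inr hD
    · left
      have hg0 : ∀ j < n, 0 ≤ g j ω := by
        intro j hj
        by_contra hneg
        push_neg at hneg
        exact hD (Set.mem_biUnion (Finset.mem_Icc.mpr ⟨Nat.succ_le_succ (Nat.zero_le j), hj⟩)
          (by simpa [hgdef] using hneg))
      have hSn : S n ω = Y n ω - Y 0 ω := by
        have : ∀ j ∈ Finset.range n, d j ω = Y (j+1) ω - Y j ω := by
          intro j hj
          simp [hddef, hg0 j (Finset.mem_range.mp hj)]
        rw [hSdef]
        simp only
        rw [Finset.sum_congr rfl this, Finset.sum_range_sub (fun i => Y i ω)]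
      simp only [Set.mem_setOf_eq] at hω ⊢
      rw [hSn]; linarith
  calc μ {ω | Y n ω ≤ Y 0 ω - ε} ≤ μ ({ω | S n ω ≤ -ε} ∪ _) := measure_mono hincl
    _ ≤ μ {ω | S n ω ≤ -ε} + _ := measure_union_le _ _
    _ ≤ _ := add_le_add_left hchernoff _
end

section
/- Let n ≥ 1, let Q be a real number and R a complex number with Q² ≤ 1/(100n) and |R| ≤ 1/(100n). Then both |1 − (1 − Q + R)^n / exp(−nQ)| ≤ 40·n·(Q² + |R|) and |1 − exp(−nQ)/(1 − Q + R)^n| ≤ 40·n·(Q² + |R|). -/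
set_option maxHeartbeats 1000000 in
theorem exp_nQ_approx (n : ℕ) (hn : 1 ≤ n) (Q : ℝ) (R : ℂ)
    (hQ : Q ^ 2 ≤ 1 / (100 * n)) (hR : ‖R‖ ≤ 1 / (100 * n)) :
    ‖1 - (1 - (Q : ℂ) + R) ^ n / (Real.exp (-(n : ℝ) * Q) : ℂ)‖ ≤
        40 * n * (Q ^ 2 + ‖R‖) ∧
      ‖1 - (Real.exp (-(n : ℝ) * Q) : ℂ) / (1 - (Q : ℂ) + R) ^ n‖ ≤
        40 * n * (Q ^ 2 + ‖R‖) := by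
  have hn1 : (1:ℝ) ≤ (n:ℝ) := by exact_mod_cast hn
  have hnpos : (0:ℝ) < (n:ℝ) := by linarith
  have hRnn : 0 ≤ ‖R‖ := norm_nonneg R
  have hQsq : 0 ≤ Q ^ 2 := sq_nonneg Q
  set D : ℝ := Q ^ 2 + ‖R‖ with hD
  have hDnn : 0 ≤ D := by positivity
  -- basic size bounds
  have hQn : (n:ℝ) * Q ^ 2 ≤ 1/100 := by
    rw [div_mul_eq_div_div] at hQ
    calc (n:ℝ) * Q^2 ≤ (n:ℝ) * (1/100/(n:ℝ)) :=
          mul_le_mul_of_nonneg_left hQ (le_of_lt hnpos)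
      _ = 1/100 := by field_simp
  have hRn : (n:ℝ) * ‖R‖ ≤ 1/100 := by
    rw [div_mul_eq_div_div] at hR
    calc (n:ℝ) * ‖R‖ ≤ (n:ℝ) * (1/100/(n:ℝ)) :=
          mul_le_mul_of_nonneg_left hR (le_of_lt hnpos)
      _ = 1/100 := by field_simp
  have hnD : (n:ℝ) * D ≤ 1/50 := by rw [hD]; nlinarith
  have hQ100 : Q ^ 2 ≤ 1/100 := by nlinarith
  have hQhi : Q ≤ (1/10 : ℝ) := by nlinarith
  -- exp bounds
  have heQpos : 0 < Real.exp Q := Real.exp_pos Q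
  have h1 : 1 - Q ≤ Real.exp (-Q) := by
    have := Real.add_one_le_exp (-Q); linarith
  have h2 : Real.exp (-Q) * Real.exp Q = 1 := by
    rw [← Real.exp_add]; simp
  have h3 : 1 + Q ≤ Real.exp Q := by have := Real.add_one_le_exp Q; linarith
  have heQle : Real.exp Q ≤ 1.2 := by nlinarith [Real.exp_pos (-Q)]
  -- key scalar bound: |(1-Q) e^Q - 1| ≤ Q^2
  have hscal : |(1 - Q) * Real.exp Q - 1| ≤ Q ^ 2 := by
    have hup : (1 - Q) * Real.exp Q ≤ 1 := by nlinarith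
    have hlo : 1 - Q ^ 2 ≤ (1 - Q) * Real.exp Q := by nlinarith
    rw [abs_le]; constructor <;> nlinarith
  -- define u
  set u : ℂ := (1 - (Q:ℂ) + R) * (Real.exp Q : ℂ) with hu
  have hu1 : ‖u - 1‖ ≤ 1.2 * D := by
    have heq : u - 1 = (((1 - Q) * Real.exp Q - 1 : ℝ) : ℂ) + R * (Real.exp Q : ℂ) := by
      rw [hu]; push_cast; ring
    rw [heq]
    calc ‖_‖ ≤ ‖(((1 - Q) * Real.exp Q - 1 : ℝ) : ℂ)‖
          + ‖R * (Real.exp Q : ℂ)‖ := norm_add_le _ _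
      _ = |(1 - Q) * Real.exp Q - 1| + ‖R‖ * Real.exp Q := by
          rw [norm_mul, Complex.norm_real, Complex.norm_real, Real.norm_eq_abs, Real.norm_eq_abs, abs_of_pos heQpos]
      _ ≤ Q ^ 2 + ‖R‖ * 1.2 := by gcongr
      _ ≤ 1.2 * D := by rw [hD]; linarith
  have hu1s : ‖u - 1‖ ≤ 0.024 / n := by
    refine hu1.trans ?_
    rw [le_div_iff₀ hnpos]; linarith
  have hsmall : (0.024 : ℝ) / n ≤ 0.024 := by
    rw [div_le_iff₀ hnpos]; nlinarith
  have habsu_le : ‖u‖ ≤ 1 + 0.024 / n := by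
    calc ‖u‖ = ‖(u - 1) + 1‖ := by ring_nf
      _ ≤ ‖u - 1‖ + ‖1‖ := norm_add_le _ _
      _ ≤ 0.024 / n + 1 := by rw [norm_one]; linarith
      _ = 1 + 0.024 / n := by ring
  have habsu_ge : 1 - 0.024 / n ≤ ‖u‖ := by
    have : ‖(1:ℂ)‖ ≤ ‖1 - u‖ + ‖u‖ := by
      calc ‖(1:ℂ)‖ = ‖(1 - u) + u‖ := by ring_nf
        _ ≤ _ := norm_add_le _ _
    rw [norm_one] at this
    rw [norm_sub_rev] at this
    linarith
  -- powers of |u|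
  have hbase_nn : (0:ℝ) ≤ 1 + 0.024 / n := by positivity
  have hpow_all : ((1:ℝ) + 0.024 / n) ^ n ≤ 3 := by
    calc ((1:ℝ) + 0.024 / n) ^ n ≤ (Real.exp (0.024 / n)) ^ n := by
          apply pow_le_pow_left₀ hbase_nn
          have := Real.add_one_le_exp (0.024 / n); linarith
      _ = Real.exp ((n:ℝ) * (0.024 / n)) := (Real.exp_nat_mul _ n).symm
      _ = Real.exp 0.024 := by
          congr 1; field_simp
      _ ≤ Real.exp 1 := by
          apply Real.exp_le_exp.mpr; norm_num
      _ ≤ 3 := by linarith [Real.exp_one_lt_d9]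
  have hpow_le : ∀ i, i ≤ n → ‖u‖ ^ i ≤ 3 := by
    intro i hi
    calc ‖u‖ ^ i ≤ (1 + 0.024 / n) ^ i :=
          pow_le_pow_left₀ (norm_nonneg u) habsu_le i
      _ ≤ ((1:ℝ) + 0.024 / n) ^ n := by
          apply pow_le_pow_right₀ (by linarith [show (0:ℝ) ≤ 0.024 / (n:ℝ) by positivity]) hi
      _ ≤ 3 := hpow_all
  -- geometric sum bound
  have hgeom : u ^ n - 1 = (u - 1) * ∑ i ∈ Finset.range n, u ^ i := by
    rw [mul_comm, geom_sum_mul]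
  have hsum : ‖∑ i ∈ Finset.range n, u ^ i‖ ≤ 3 * n := by
    calc ‖∑ i ∈ Finset.range n, u ^ i‖
        ≤ ∑ i ∈ Finset.range n, ‖u ^ i‖ :=
          norm_sum_le _ _
      _ ≤ ∑ _i ∈ Finset.range n, (3:ℝ) := by
          apply Finset.sum_le_sum
          intro i hi
          rw [norm_pow]
          exact hpow_le i (le_of_lt (Finset.mem_range.mp hi))
      _ = 3 * n := by simp [mul_comm]
  have hun1 : ‖u ^ n - 1‖ ≤ 3.6 * ((n:ℝ) * D) := by
    rw [hgeom, norm_mul]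
    calc ‖u - 1‖ * ‖∑ i ∈ Finset.range n, u ^ i‖
        ≤ (1.2 * D) * (3 * n) := by
          apply mul_le_mul hu1 hsum (norm_nonneg _) (by positivity)
      _ = 3.6 * ((n:ℝ) * D) := by ring
  -- lower bound on |u^n|
  have hun_lo : (0.9 : ℝ) ≤ ‖u ^ n‖ := by
    rw [norm_pow]
    calc (0.9 : ℝ) ≤ 1 + (n:ℝ) * (-(0.024 / n)) := by
          have : (n:ℝ) * (0.024 / n) = 0.024 := by field_simp
          nlinarith
      _ ≤ (1 + -(0.024 / n)) ^ n := by
          apply one_add_mul_le_pow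
          have : (0:ℝ) ≤ 0.024 / n := by positivity
          linarith
      _ ≤ ‖u‖ ^ n := by
          apply pow_le_pow_left₀
          · linarith
          · linarith [habsu_ge]
  have hun_ne : u ^ n ≠ 0 := by
    intro h
    rw [h, norm_zero] at hun_lo; linarith
  -- rewrite the two expressions
  have hEn : (Real.exp (-(n:ℝ) * Q) : ℂ) = ((Real.exp Q : ℂ) ^ n)⁻¹ := by
    rw [show (-(n:ℝ) * Q) = (n:ℕ) * (-Q) by push_cast; ring, Real.exp_nat_mul,
      Real.exp_neg]
    push_cast
    rw [inv_pow]
  have hfirst : (1 - (Q : ℂ) + R) ^ n / (Real.exp (-(n:ℝ) * Q) : ℂ) = u ^ n := by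
    rw [hEn, div_eq_mul_inv, inv_inv, hu, mul_pow]
  have hsecond : (Real.exp (-(n:ℝ) * Q) : ℂ) / (1 - (Q : ℂ) + R) ^ n = (u ^ n)⁻¹ := by
    rw [hEn, hu, mul_pow, mul_inv, div_eq_mul_inv]
    ring
  constructor
  · rw [hfirst]
    calc ‖1 - u ^ n‖ = ‖u ^ n - 1‖ := norm_sub_rev _ _
      _ ≤ 3.6 * ((n:ℝ) * D) := hun1
      _ ≤ 40 * n * D := by nlinarith
  · rw [hsecond]
    have heq : (1 : ℂ) - (u ^ n)⁻¹ = (u ^ n - 1) / u ^ n := by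
      field_simp
    rw [heq, norm_div]
    rw [div_le_iff₀ (by linarith : (0:ℝ) < ‖u ^ n‖)]
    calc ‖u ^ n - 1‖ ≤ 3.6 * ((n:ℝ) * D) := hun1
      _ ≤ (40 * n * D) * 0.9 := by nlinarith [mul_nonneg (le_of_lt hnpos) hDnn]
      _ ≤ 40 * n * D * ‖u ^ n‖ :=
          mul_le_mul_of_nonneg_left hun_lo (by positivity)
end

section
/- For every choice of n-sided dice A and B with faces in [0,n] and all real numbers α, β, γ with γ ≠ α + β: |f̂(α,β,γ)| ≤ 1/|γ − α − β|. -/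
open MeasureTheory Set

/-- `g_A(x) = |{i : a_i ≤ x}| - x` for a die with faces in `[0,n]`. -/
noncomputable def gDie (n : ℕ) (A : Fin n → ℝ) (x : ℝ) : ℝ :=
  ((Finset.univ.filter fun i => A i ≤ x).card : ℝ) - x

/-- `e(x) = exp(2πix)`. -/
noncomputable def eFun (x : ℝ) : ℂ := Complex.exp (2 * Real.pi * Complex.I * x)

/-- The characteristic function `f̂(α,β,γ) = E[e(α g_A(V) + β g_B(V) + γ (V - n/2))]`
with `V` uniform on `[0,n]`. -/
noncomputable def fhat (n : ℕ) (A B : Fin n → ℝ) (α β γ : ℝ) : ℂ :=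
  (n : ℂ)⁻¹ *
    ∫ t in Set.Icc (0 : ℝ) (n : ℝ),
      eFun (α * gDie n A t + β * gDie n B t + γ * (t - (n : ℝ) / 2))

lemma norm_eFun (x : ℝ) : ‖eFun x‖ = 1 := by
  simp [eFun, Complex.norm_exp]

lemma gDie_eq_sum (n : ℕ) (A : Fin n → ℝ) (x : ℝ) :
    gDie n A x = (∑ i : Fin n, if A i ≤ x then (1:ℝ) else 0) - x := by
  unfold gDie
  congr 1
  rw [Finset.card_filter]
  push_cast
  rfl

lemma F_measurable (n : ℕ) (A B : Fin n → ℝ) (α β γ : ℝ) :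
    Measurable (fun t =>
      eFun (α * gDie n A t + β * gDie n B t + γ * (t - (n : ℝ) / 2))) := by
  have hcont : Continuous eFun := by
    unfold eFun; fun_prop
  apply hcont.measurable.comp
  have hg : ∀ (C : Fin n → ℝ), Measurable (gDie n C) := by
    intro C
    have : gDie n C = fun x => (∑ i : Fin n, if C i ≤ x then (1:ℝ) else 0) - x := by
      funext x; exact gDie_eq_sum n C x
    rw [this]
    apply Measurable.sub _ measurable_id
    apply Finset.measurable_sum
    intro i _
    exact Measurable.ite (measurableSet_Ici (a := C i)) measurable_const measurable_const
  fun_prop (disch := exact hg _)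

lemma F_intervalIntegrable (n : ℕ) (A B : Fin n → ℝ) (α β γ : ℝ) (a b : ℝ) :
    IntervalIntegrable (fun t =>
      eFun (α * gDie n A t + β * gDie n B t + γ * (t - (n : ℝ) / 2))) volume a b := by
  rw [intervalIntegrable_iff]
  apply Integrable.mono' (g := fun _ => (1:ℝ))
  · exact (integrableOn_const_iff).mpr (Or.inr measure_Ioc_lt_top)
  · exact (F_measurable n A B α β γ).aestronglyMeasurable
  · filter_upwards with t
    rw [norm_eFun]

lemma piece_bound (c d : ℝ) (hc : c ≠ 0) (u v : ℝ) (huv : u ≤ v) (f : ℝ → ℂ)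
    (hf : ∀ t ∈ Set.Ioo u v, f t = eFun d * Complex.exp ((2*Real.pi*Complex.I*c) * t)) :
    ‖∫ t in u..v, f t‖ ≤ 1 / (Real.pi * |c|) := by
  have hc2 : (2*Real.pi*Complex.I*(c:ℂ)) ≠ 0 := by
    simp [Real.pi_ne_zero, Complex.I_ne_zero, hc]
  have hae : ∀ᵐ t : ℝ, t ∈ Set.uIoc u v →
      f t = eFun d * Complex.exp ((2*Real.pi*Complex.I*c) * t) := by
    have hv : ∀ᵐ t : ℝ, t ∉ ({v} : Set ℝ) :=
      measure_eq_zero_iff_ae_notMem.mp Real.volume_singleton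
    filter_upwards [hv] with t htv htm
    rw [Set.uIoc_of_le huv] at htm
    exact hf t ⟨htm.1, lt_of_le_of_ne htm.2 (by simpa using htv)⟩
  have h1 : ∫ t in u..v, f t
      = eFun d * ((Complex.exp ((2*Real.pi*Complex.I*c) * v)
        - Complex.exp ((2*Real.pi*Complex.I*c) * u)) / (2*Real.pi*Complex.I*c)) := by
    rw [intervalIntegral.integral_congr_ae hae, intervalIntegral.integral_const_mul]
    congr 1
    exact integral_exp_mul_complex hc2
  have hnexp : ∀ w : ℝ, ‖Complex.exp ((2*Real.pi*Complex.I*c) * w)‖ = 1 := by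
    intro w
    have : (2*Real.pi*Complex.I*(c:ℂ)) * (w:ℂ) = 2*Real.pi*Complex.I*((c*w : ℝ) : ℂ) := by
      push_cast; ring
    rw [this]
    exact norm_eFun (c*w)
  have hden : ‖(2*Real.pi*Complex.I*(c:ℂ))‖ = 2*Real.pi*|c| := by
    simp [norm_mul, Complex.norm_real, Real.norm_eq_abs,
      abs_of_pos Real.pi_pos]
  rw [h1, norm_mul, norm_eFun, one_mul, norm_div, hden]
  have hnum : ‖Complex.exp ((2*Real.pi*Complex.I*c) * v)
      - Complex.exp ((2*Real.pi*Complex.I*c) * u)‖ ≤ 2 := by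
    calc _ ≤ ‖Complex.exp ((2*Real.pi*Complex.I*c) * v)‖
        + ‖Complex.exp ((2*Real.pi*Complex.I*c) * u)‖ := norm_sub_le _ _
    _ = 2 := by rw [hnexp, hnexp]; norm_num
  have hcpos : 0 < |c| := abs_pos.mpr hc
  rw [div_le_div_iff₀ (by positivity) (by positivity)]
  have := mul_le_mul_of_nonneg_right hnum (by positivity : (0:ℝ) ≤ Real.pi * |c|)
  linarith

theorem fhat_large_gamma_bound (n : ℕ) (A B : Fin n → ℝ)
    (hA : ∀ i, A i ∈ Set.Icc (0 : ℝ) (n : ℝ)) (hB : ∀ i, B i ∈ Set.Icc (0 : ℝ) (n : ℝ))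
    (α β γ : ℝ) (h : γ ≠ α + β) :
    ‖fhat n A B α β γ‖ ≤ 1 / |γ - α - β| := by
  set c : ℝ := γ - α - β with hcdef
  have hc : c ≠ 0 := by
    intro hc0
    exact h (by linarith [sub_eq_zero.mp (by linarith [hc0] : γ - (α + β) = 0)])
  have hcpos : 0 < |c| := abs_pos.mpr hc
  rcases Nat.eq_zero_or_pos n with hn0 | hn
  · subst hn0
    simp only [fhat, Nat.cast_zero, inv_zero, zero_mul, norm_zero]
    positivity
  -- main case
  set F : ℝ → ℂ := fun t =>
    eFun (α * gDie n A t + β * gDie n B t + γ * (t - (n : ℝ) / 2)) with hF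
  -- sorted list of breakpoints
  classical
  set S : List ℝ := Multiset.sort (↑(List.ofFn A ++ List.ofFn B)) (· ≤ ·) with hS
  set P : List ℝ := 0 :: S with hP
  have hSmem : ∀ x ∈ S, x ∈ Set.Icc (0:ℝ) (n:ℝ) := by
    intro x hx
    rw [hS, Multiset.mem_sort] at hx
    simp only [Multiset.mem_coe, List.mem_append, List.mem_ofFn] at hx
    rcases hx with ⟨i, rfl⟩ | ⟨i, rfl⟩
    · exact hA i
    · exact hB i
  have hPmem : ∀ x ∈ P, x ∈ Set.Icc (0:ℝ) (n:ℝ) := by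
    intro x hx
    rcases List.mem_cons.mp hx with rfl | hx
    · exact ⟨le_refl _, Nat.cast_nonneg n⟩
    · exact hSmem x hx
  have hPlen : P.length = 2*n + 1 := by
    rw [hP, List.length_cons, hS, Multiset.length_sort]
    simp [Multiset.coe_card, List.length_append, List.length_ofFn]
    ring
  have hPsorted : List.Pairwise (· ≤ ·) P := by
    rw [hP, List.pairwise_cons]
    exact ⟨fun b hb => (hSmem b hb).1, Multiset.pairwise_sort _ _⟩
  set a : ℕ → ℝ := fun k => P.getD k (n:ℝ) with ha
  have ha0 : a 0 = 0 := rfl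
  have hatop : ∀ k, P.length ≤ k → a k = n := fun k hk => List.getD_eq_default P _ hk
  have haget : ∀ k (hk : k < P.length), a k = P.get ⟨k, hk⟩ := by
    intro k hk
    exact (List.getD_eq_getElem P _ hk).trans (List.get_eq_getElem (l := P) (i := ⟨k, hk⟩)).symm
  have hale : ∀ k, a k ≤ n := by
    intro k
    by_cases hk : k < P.length
    · rw [haget k hk]; exact (hPmem _ (List.get_mem P ⟨k, hk⟩)).2
    · rw [hatop k (not_lt.mp hk)]
  have hmono : Monotone a := by
    apply monotone_nat_of_le_succ
    intro k
    by_cases hk1 : k + 1 < P.length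
    · rw [haget k (Nat.lt_of_succ_lt hk1), haget (k+1) hk1]
      exact List.pairwise_iff_get.mp hPsorted ⟨k, _⟩ ⟨k+1, _⟩ (Nat.lt_succ_self k)
    · rw [hatop (k+1) (not_lt.mp hk1)]
      exact hale k
  have hkey : ∀ x ∈ P, ∀ k, x ∉ Set.Ioo (a k) (a (k+1)) := by
    intro x hx k hmem
    obtain ⟨⟨j, hj⟩, hget⟩ := List.mem_iff_get.mp hx
    rcases le_or_gt j k with hjk | hjk
    · have : x ≤ a k := by
        rw [← hget, ← haget j hj]
        exact hmono hjk
      exact absurd hmem.1 (not_lt.mpr this)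
    · have : a (k+1) ≤ x := by
        rw [← hget, ← haget j hj]
        exact hmono hjk
      exact absurd hmem.2 (not_lt.mpr this)
  -- each piece
  have piece : ∀ k, ‖∫ t in a k..a (k+1), F t‖ ≤ 1 / (Real.pi * |c|) := by
    intro k
    set u := a k with hu
    set v := a (k+1) with hv
    have huv : u ≤ v := hmono (Nat.le_succ k)
    set cA : ℕ := (Finset.univ.filter fun i => A i ≤ u).card with hcA
    set cB : ℕ := (Finset.univ.filter fun i => B i ≤ u).card with hcB
    apply piece_bound c (α*cA + β*cB - γ*((n:ℝ)/2)) hc u v huv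
    intro t ht
    have hcnt : ∀ (C : Fin n → ℝ), (∀ i, C i ∈ P) →
        ((Finset.univ.filter fun i => C i ≤ t).card
          = (Finset.univ.filter fun i => C i ≤ u).card) := by
      intro C hCP
      congr 1
      apply Finset.filter_congr
      intro i _
      have hnot := hkey (C i) (hCP i) k
      constructor
      · intro hle
        by_contra hgt
        push_neg at hgt
        exact hnot ⟨hgt, lt_of_le_of_lt hle ht.2⟩
      · intro hle
        exact hle.trans ht.1.le
    have hAP : ∀ i, A i ∈ P := by
      intro i
      rw [hP, List.mem_cons]
      right
      rw [hS, Multiset.mem_sort]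
      simp [List.mem_ofFn]
    have hBP : ∀ i, B i ∈ P := by
      intro i
      rw [hP, List.mem_cons]
      right
      rw [hS, Multiset.mem_sort]
      simp [List.mem_ofFn]
    have hgA : gDie n A t = (cA : ℝ) - t := by
      unfold gDie; rw [hcnt A hAP]
    have hgB : gDie n B t = (cB : ℝ) - t := by
      unfold gDie; rw [hcnt B hBP]
    have harg : α * gDie n A t + β * gDie n B t + γ * (t - (n:ℝ)/2)
        = (α*cA + β*cB - γ*((n:ℝ)/2)) + c * t := by
      rw [hgA, hgB, hcdef]; ring
    rw [hF]
    simp only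
    rw [harg]
    unfold eFun
    rw [← Complex.exp_add]
    congr 1
    push_cast
    ring
  -- sum over pieces
  have hint : ∀ k < 2*n+1, IntervalIntegrable F volume (a k) (a (k+1)) :=
    fun k _ => F_intervalIntegrable n A B α β γ _ _
  have hsum := intervalIntegral.sum_integral_adjacent_intervals (μ := volume) hint
  have haend : a (2*n+1) = n := hatop _ (le_of_eq hPlen)
  have htot' : ‖∫ t in (a 0)..(a (2*n+1)), F t‖ ≤ (2*n+1) / (Real.pi * |c|) := by
    rw [← hsum]
    calc ‖∑ k ∈ Finset.range (2*n+1), ∫ t in a k..a (k+1), F t‖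
        ≤ ∑ k ∈ Finset.range (2*n+1), ‖∫ t in a k..a (k+1), F t‖ := norm_sum_le _ _
      _ ≤ ∑ _k ∈ Finset.range (2*n+1), 1 / (Real.pi * |c|) :=
          Finset.sum_le_sum fun k _ => piece k
      _ = (2*n+1) / (Real.pi * |c|) := by
          rw [Finset.sum_const, Finset.card_range]
          push_cast
          ring
  have htot : ‖∫ t in (0:ℝ)..(n:ℝ), F t‖ ≤ (2*n+1) / (Real.pi * |c|) := by
    have := htot'
    rwa [ha0, haend] at this
  -- assemble
  have hIcc : (∫ t in Set.Icc (0:ℝ) (n:ℝ), F t) = ∫ t in (0:ℝ)..(n:ℝ), F t := by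
    rw [MeasureTheory.integral_Icc_eq_integral_Ioc,
      intervalIntegral.integral_of_le (by exact_mod_cast Nat.cast_nonneg n)]
  have hfh : fhat n A B α β γ = (n:ℂ)⁻¹ * ∫ t in (0:ℝ)..(n:ℝ), F t := by
    rw [fhat, ← hIcc]
  have hnpos : (0:ℝ) < n := by exact_mod_cast hn
  have habs : ‖fhat n A B α β γ‖
      = (n:ℝ)⁻¹ * ‖∫ t in (0:ℝ)..(n:ℝ), F t‖ := by
    rw [hfh, norm_mul]
    congr 1
    rw [norm_inv]
    simp
  rw [habs]
  have hstep : (n:ℝ)⁻¹ * ‖∫ t in (0:ℝ)..(n:ℝ), F t‖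
      ≤ (n:ℝ)⁻¹ * ((2*n+1) / (Real.pi * |c|)) := by
    apply mul_le_mul_of_nonneg_left htot (by positivity)
  apply hstep.trans
  rw [inv_mul_eq_div, div_div, div_le_div_iff₀ (by positivity) hcpos]
  have hpi : (3:ℝ) < Real.pi := Real.pi_gt_three
  have hn1 : (1:ℝ) ≤ n := by exact_mod_cast hn
  have hkey2 : (2*(n:ℝ)+1) ≤ Real.pi * n := by
    nlinarith [mul_nonneg (by linarith : (0:ℝ) ≤ Real.pi - 3) (by linarith : (0:ℝ) ≤ (n:ℝ))]
  calc (2*(n:ℝ)+1) * |c| ≤ (Real.pi * n) * |c| :=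
        mul_le_mul_of_nonneg_right hkey2 hcpos.le
    _ = 1 * (Real.pi * |c| * n) := by ring
end
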